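/- The multiplicative composition product on unital shuffle series, defined by δ_c ∘ δ_d = δ ⧢ (d ⧢ (c ∘̄ δ_d)), is associative: (δ_c ∘ δ_d) ∘ δ_e = δ_c ∘ (δ_d ∘ δ_e) for all c, d, e ∈ ℝ^m⟨⟨X⟩⟩. Hence δ ⧢ ℝ^m⟨⟨X⟩⟩ forms a monoid with identity δ_1 (corresponding to the constant series 1). -/

import Mathlib

open scoped BigOperators

namespace FPS

/-- A (noncommutative) formal power series over alphabet `X` is a map from words to `ℝ`. -/
abbrev Series (X : Type*) := List X → ℝ

noncomputable section

variable {X : Type*} [DecidableEq X]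

/-- The series `1·∅`. -/
def one : Series X := fun η => if η = [] then 1 else 0

/-- Cauchy (concatenation) product. -/
def cauchy (c d : Series X) : Series X := fun η =>
  ∑ i ∈ Finset.range (η.length + 1), c (η.take i) * d (η.drop i)

/-- Shuffle product. -/
def sh (c d : Series X) : List X → ℝ
  | [] => c [] * d []
  | x :: t => sh (fun w => c (x :: w)) d t + sh c (fun w => d (x :: w)) t

/-- Cauchy powers. -/
def cpow (c : Series X) : ℕ → Series X
  | 0 => one
  | k + 1 => cauchy c (cpow c k)

/-- Shuffle powers. -/
def shpow (c : Series X) : ℕ → Series X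
  | 0 => one
  | k + 1 => sh c (shpow c k)

/-- The proper series `1 - s/(s,∅)` entering the inverse formulas (negated proper part of `s/(s,∅)`). -/
def sprime (s : Series X) : Series X := fun w => if w = [] then 0 else - (s w / s [])

/-- Cauchy inverse `(s,∅)⁻¹ Σ_k (s')^k` of a purely improper series. -/
def cInv (s : Series X) : Series X := fun η =>
  (s [])⁻¹ * ∑ k ∈ Finset.range (η.length + 1), cpow (sprime s) k η

/-- Shuffle inverse `(s,∅)⁻¹ Σ_k (s')^{⧢k}` of a purely improper series. -/
def shInv (s : Series X) : Series X := fun η =>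
  (s [])⁻¹ * ∑ k ∈ Finset.range (η.length + 1), shpow (sprime s) k η

/-- The order: minimal length of a word in the support (`⊤` for the zero series). -/
def ord (c : Series X) : ℕ∞ := sInf ((fun η : List X => (η.length : ℕ∞)) '' {η | c η ≠ 0})

/-- `σ^n` with `σ^⊤ = 0`. -/
def powE (σ : ℝ) : ℕ∞ → ℝ := fun n => if n = ⊤ then 0 else σ ^ n.toNat

/-- The ultrametric `κ(c,d) = σ^{ord(c-d)}`. -/
def kappa (σ : ℝ) (c d : Series X) : ℝ := powE σ (ord (c - d))

/-- Order of a vector of series (minimum over components). -/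
def ordV {n : ℕ} (c : Fin n → Series X) : ℕ∞ := ⨅ i, ord (c i)

/-- Ultrametric on vectors of series. -/
def kappaV (σ : ℝ) {n : ℕ} (c d : Fin n → Series X) : ℝ := powE σ (ordV (c - d))

/-- Proper part `c - (c,∅)∅`. -/
def properPart (c : Series X) : Series X := fun w => if w = [] then 0 else c w

/-- Left concatenation by a letter: `x·s`. -/
def leftc (x : X) (s : Series X) : Series X := fun η =>
  match η with
  | [] => 0
  | y :: t => if y = x then s t else 0

end

noncomputable section

/-- `φ̄_d(η)` : the algebra homomorphism defining the multiplicative mixed composition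
product, with `φ̄_d(x_0)(w) = x_0 w` and `φ̄_d(x_i)(w) = x_i (d_i ⧢ w)`. -/
def phiWord {m : ℕ} (d : Fin m → Series (Fin (m + 1))) :
    List (Fin (m + 1)) → Series (Fin (m + 1)) → Series (Fin (m + 1))
  | [], w => w
  | i :: t, w =>
      Fin.cases (leftc 0 (phiWord d t w)) (fun j => leftc j.succ (sh (d j) (phiWord d t w))) i

/-- Multiplicative mixed composition product `c ∘̄ δ_d = Σ_η (c,η) φ̄_d(η)(1)`. -/
def mix {m : ℕ} (c : Series (Fin (m + 1))) (d : Fin m → Series (Fin (m + 1))) :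
    Series (Fin (m + 1)) := fun η =>
  ∑ k ∈ Finset.range (η.length + 1),
    ∑ v : List.Vector (Fin (m + 1)) k, c v.toList * phiWord d v.toList one η

/-- `ψ_e(η)` : the algebra homomorphism defining the composition product, with
`ψ_e(x'_i)(w) = x_0 (e_i ⧢ w)`, `e_0 = 1∅`. -/
def psiWord {ℓ m : ℕ} (e : Fin ℓ → Series (Fin (m + 1))) :
    List (Fin (ℓ + 1)) → Series (Fin (m + 1)) → Series (Fin (m + 1))
  | [], w => w
  | i :: t, w => leftc 0 (sh (Fin.cases one e i) (psiWord e t w))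

/-- Composition product `c ∘ e = Σ_η (c,η) ψ_e(η)(1)`. -/
def comp {ℓ m : ℕ} (c : Series (Fin (ℓ + 1))) (e : Fin ℓ → Series (Fin (m + 1))) :
    Series (Fin (m + 1)) := fun η =>
  ∑ k ∈ Finset.range (η.length + 1),
    ∑ v : List.Vector (Fin (ℓ + 1)) k, c v.toList * psiWord e v.toList one η

/-- The multiplicative composition product on `δ`-series:
`δ_c ∘ δ_d = δ_{d ⧢ (c ∘̄ δ_d)}`, expressed on the underlying series. -/
def star {m : ℕ} (c d : Fin m → Series (Fin (m + 1))) : Fin m → Series (Fin (m + 1)) :=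
  fun i => sh (d i) (mix (c i) d)

/-- The all-ones series vector (generating series of the identity `δ_1`). -/
def oneV {X : Type*} [DecidableEq X] (m : ℕ) : Fin m → Series X := fun _ => one

open Classical in
/-- The inverse `d^{∘-1}` in the multiplicative dynamic output feedback group: the unique
solution of `e = d^{⧢-1} ∘̄ δ_e`. -/
def dynInv {m : ℕ} (d : Fin m → Series (Fin (m + 1))) : Fin m → Series (Fin (m + 1)) :=
  if h : ∃ e : Fin m → Series (Fin (m + 1)), e = fun i => mix (shInv (d i)) e then h.choose
  else oneV m

/-- Shuffle power of a family: `c^{⧢n} = c_1^{⧢n_1} ⧢ ⋯ ⧢ c_ℓ^{⧢n_ℓ}`. -/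
def shFam {X : Type*} [DecidableEq X] {ℓ : ℕ} (c : Fin ℓ → Series X) (n : Fin ℓ →₀ ℕ) :
    Series X :=
  (List.finRange ℓ).foldr (fun i acc => sh (shpow (c i) (n i)) acc) one

/-- Wiener-Fliess composition product `d ∘̂ c = Σ_{η∈X̃*} (d,η) c^{⧢η}` of a commutative
series `d` with a (proper) noncommutative series vector `c`. -/
def wf {X : Type*} [DecidableEq X] {ℓ : ℕ} (d : MvPowerSeries (Fin ℓ) ℝ)
    (c : Fin ℓ → Series X) : Series X := fun η =>
  ∑ n ∈ Finset.Iic (Finsupp.equivFunOnFinite.symm fun _ : Fin ℓ => η.length),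
    MvPowerSeries.coeff n d * shFam c n η

end

/-! ### Auxiliary development for STATEMENT 11 -/

noncomputable section ShuffleLemmas
variable {X : Type*} [DecidableEq X]

/-- Left shift of a series by a letter. -/
def cleft (x : X) (c : Series X) : Series X := fun w => c (x :: w)

lemma sh_nil (a b : Series X) : sh a b [] = a [] * b [] := rfl

lemma sh_cons (a b : Series X) (x : X) (t : List X) :
    sh a b (x :: t) = sh (cleft x a) b t + sh a (cleft x b) t := rfl

lemma cleft_zero (x : X) : cleft x (0 : Series X) = 0 := rfl

lemma sh_zero_left : ∀ (η : List X) (b : Series X), sh (0 : Series X) b η = 0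
  | [], b => by simp [sh_nil]
  | x :: t, b => by
      rw [sh_cons, cleft_zero, sh_zero_left t b, sh_zero_left t (cleft x b), add_zero]

lemma sh_zero_right : ∀ (η : List X) (a : Series X), sh a (0 : Series X) η = 0
  | [], a => by simp [sh_nil]
  | x :: t, a => by
      rw [sh_cons, cleft_zero, sh_zero_right t a, sh_zero_right t (cleft x a), add_zero]

lemma sh_add_left : ∀ (η : List X) (a a' b : Series X),
    sh (a + a') b η = sh a b η + sh a' b η
  | [], a, a', b => by simp [sh_nil, add_mul]
  | x :: t, a, a', b => by
      have h : cleft x (a + a') = cleft x a + cleft x a' := rfl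
      rw [sh_cons, h, sh_add_left t _ _ b, sh_add_left t a a' (cleft x b), sh_cons, sh_cons]
      ring

lemma sh_add_right : ∀ (η : List X) (a b b' : Series X),
    sh a (b + b') η = sh a b η + sh a b' η
  | [], a, b, b' => by simp [sh_nil, mul_add]
  | x :: t, a, b, b' => by
      have h : cleft x (b + b') = cleft x b + cleft x b' := rfl
      rw [sh_cons, h, sh_add_right t _ b b', sh_add_right t a (cleft x b) (cleft x b'),
        sh_cons, sh_cons]
      ring

lemma sh_smul_right : ∀ (η : List X) (r : ℝ) (a b : Series X),
    sh a (fun w => r * b w) η = r * sh a b η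
  | [], r, a, b => by simp [sh_nil]; ring
  | x :: t, r, a, b => by
      have h : cleft x (fun w => r * b w) = fun w => r * (cleft x b) w := rfl
      rw [sh_cons, h, sh_smul_right t r _ b, sh_smul_right t r a (cleft x b), sh_cons]
      ring

lemma sh_sum_right : ∀ (η : List X) {ι : Type*} (s : Finset ι) (f : ι → Series X)
    (a : Series X), sh a (fun w => ∑ i ∈ s, f i w) η = ∑ i ∈ s, sh a (f i) η
  | [], ι, s, f, a => by simp [sh_nil, Finset.mul_sum]
  | x :: t, ι, s, f, a => by
      have h : cleft x (fun w => ∑ i ∈ s, f i w) = fun w => ∑ i ∈ s, (cleft x (f i)) w := rfl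
      rw [sh_cons, h, sh_sum_right t s f (cleft x a), sh_sum_right t s _ a,
        ← Finset.sum_add_distrib]
      exact Finset.sum_congr rfl fun i _ => (sh_cons a (f i) x t).symm

lemma sh_comm : ∀ (η : List X) (a b : Series X), sh a b η = sh b a η
  | [], a, b => by simp [sh_nil]; ring
  | x :: t, a, b => by
      rw [sh_cons, sh_cons, sh_comm t (cleft x a) b, sh_comm t a (cleft x b)]
      ring

lemma sh_assoc : ∀ (η : List X) (a b c : Series X),
    sh (sh a b) c η = sh a (sh b c) η
  | [], a, b, c => by simp [sh_nil]; ring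
  | x :: t, a, b, c => by
      have h1 : cleft x (sh a b) = sh (cleft x a) b + sh a (cleft x b) :=
        funext fun w => sh_cons a b x w
      have h2 : cleft x (sh b c) = sh (cleft x b) c + sh b (cleft x c) :=
        funext fun w => sh_cons b c x w
      rw [sh_cons, h1, sh_add_left, sh_assoc t (cleft x a) b c, sh_assoc t a (cleft x b) c,
        sh_assoc t a b (cleft x c), sh_cons, h2, sh_add_right]
      ring

lemma sh_congr : ∀ (η : List X) (a a' b b' : Series X),
    (∀ w : List X, w.length ≤ η.length → a w = a' w) →
    (∀ w : List X, w.length ≤ η.length → b w = b' w) → sh a b η = sh a' b' η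
  | [], a, a', b, b', ha, hb => by
      rw [sh_nil, sh_nil, ha [] (le_refl 0), hb [] (le_refl 0)]
  | x :: t, a, a', b, b', ha, hb => by
      rw [sh_cons, sh_cons,
        sh_congr t (cleft x a) (cleft x a') b b'
          (fun w hw => ha (x :: w) (by simpa using Nat.succ_le_succ hw))
          (fun w hw => hb w (le_trans hw (Nat.le_succ _))),
        sh_congr t a a' (cleft x b) (cleft x b')
          (fun w hw => ha w (le_trans hw (Nat.le_succ _)))
          (fun w hw => hb (x :: w) (by simpa using Nat.succ_le_succ hw))]

lemma cleft_one (x : X) : cleft x (one : Series X) = 0 :=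
  funext fun w => by simp [cleft, one]

lemma sh_one_left : ∀ (η : List X) (b : Series X), sh (one : Series X) b η = b η
  | [], b => by simp [sh_nil, one]
  | x :: t, b => by
      rw [sh_cons, cleft_one, sh_zero_left, zero_add]
      exact sh_one_left t (cleft x b)

lemma sh_one_right (η : List X) (b : Series X) : sh b (one : Series X) η = b η := by
  rw [sh_comm, sh_one_left]

lemma vector_sum_zero {α : Type*} [Fintype α] [DecidableEq α] (f : List.Vector α 0 → ℝ) :
    ∑ v : List.Vector α 0, f v = f List.Vector.nil := by
  haveI : Unique (List.Vector α 0) := ⟨⟨List.Vector.nil⟩, fun v => v.eq_nil⟩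
  exact (Fintype.sum_unique f).trans (congrArg f (List.Vector.eq_nil _))

lemma vector_sum_succ {α : Type*} [Fintype α] [DecidableEq α] (k : ℕ)
    (f : List.Vector α (k + 1) → ℝ) :
    ∑ v : List.Vector α (k + 1), f v = ∑ i : α, ∑ t : List.Vector α k, f (i ::ᵥ t) := by
  rw [← Equiv.sum_comp
      (⟨fun p => p.1 ::ᵥ p.2, fun v => (v.head, v.tail),
        fun p => by simp, fun v => by simp⟩ :
        α × List.Vector α k ≃ List.Vector α (k + 1)) f,
    Fintype.sum_prod_type]
  rfl

end ShuffleLemmas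

noncomputable section MixLemmas
variable {m : ℕ} (e : Fin m → Series (Fin (m + 1)))

lemma leftc_cons (x y : Fin (m + 1)) (s : Series (Fin (m + 1))) (t : List (Fin (m + 1))) :
    leftc x s (y :: t) = if y = x then s t else 0 := rfl

lemma phiWord_nil (w : Series (Fin (m + 1))) : phiWord e [] w = w := rfl

lemma phiWord_cons_zero (L : List (Fin (m + 1))) (w : Series (Fin (m + 1))) :
    phiWord e ((0 : Fin (m + 1)) :: L) w = leftc 0 (phiWord e L w) := by
  simp [phiWord]

lemma phiWord_cons_succ (j : Fin m) (L : List (Fin (m + 1))) (w : Series (Fin (m + 1))) :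
    phiWord e (j.succ :: L) w = leftc j.succ (sh (e j) (phiWord e L w)) := by
  simp [phiWord]

lemma phiWord_eq_zero : ∀ (L η : List (Fin (m + 1))), η.length < L.length →
    phiWord e L one η = 0
  | [], η, h => absurd h (Nat.not_lt_zero _)
  | i :: t, [], h => by
      cases i using Fin.cases with
      | zero => rw [phiWord_cons_zero]; rfl
      | succ j => rw [phiWord_cons_succ]; rfl
  | i :: t, y :: η', h => by
      have h' : η'.length < t.length := Nat.lt_of_succ_lt_succ h
      cases i using Fin.cases with
      | zero =>
          rw [phiWord_cons_zero, leftc_cons]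
          split
          · exact phiWord_eq_zero t η' h'
          · rfl
      | succ j =>
          rw [phiWord_cons_succ, leftc_cons]
          split
          · calc sh (e j) (phiWord e t one) η' = sh (e j) 0 η' :=
                  sh_congr η' _ _ _ _ (fun w _ => rfl)
                    (fun w hw => phiWord_eq_zero t w (lt_of_le_of_lt hw h'))
              _ = 0 := sh_zero_right η' _
          · rfl

lemma mix_apply (c : Series (Fin (m + 1))) (η : List (Fin (m + 1))) :
    mix c e η = ∑ k ∈ Finset.range (η.length + 1),
      ∑ v : List.Vector (Fin (m + 1)) k, c v.toList * phiWord e v.toList one η := rfl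

lemma mix_nil (c : Series (Fin (m + 1))) : mix c e [] = c [] := by
  rw [mix_apply]
  simp only [List.length_nil, zero_add, Finset.sum_range_one]
  rw [vector_sum_zero]
  simp [phiWord, one]

lemma mix_zero (η : List (Fin (m + 1))) : mix (0 : Series (Fin (m + 1))) e η = 0 := by
  simp [mix_apply]

lemma mix_add (a b : Series (Fin (m + 1))) (η : List (Fin (m + 1))) :
    mix (a + b) e η = mix a e η + mix b e η := by
  simp [mix_apply, add_mul, Finset.sum_add_distrib]

lemma mix_agree (c : Series (Fin (m + 1))) (N : ℕ) (w : List (Fin (m + 1)))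
    (hw : w.length ≤ N) :
    mix c e w = ∑ k ∈ Finset.range (N + 1),
      ∑ v : List.Vector (Fin (m + 1)) k, c v.toList * phiWord e v.toList one w := by
  rw [mix_apply]
  apply Finset.sum_subset (Finset.range_subset_range.2 (by omega))
  intro k _ hk'
  apply Finset.sum_eq_zero
  intro v _
  rw [phiWord_eq_zero e v.toList w (by
    rw [List.Vector.toList_length]
    simp only [Finset.mem_range, not_lt] at hk'
    omega), mul_zero]

lemma mix_cons_zero (c : Series (Fin (m + 1))) (η : List (Fin (m + 1))) :
    mix c e ((0 : Fin (m + 1)) :: η) = mix (cleft 0 c) e η := by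
  have key : ∀ k : ℕ, (∑ v : List.Vector (Fin (m + 1)) (k + 1),
      c v.toList * phiWord e v.toList one ((0 : Fin (m + 1)) :: η))
      = ∑ t : List.Vector (Fin (m + 1)) k,
          (cleft 0 c) t.toList * phiWord e t.toList one η := by
    intro k
    rw [vector_sum_succ, Fin.sum_univ_succ]
    have h2 : ∀ j : Fin m, (∑ t : List.Vector (Fin (m + 1)) k,
        c ((j.succ ::ᵥ t).toList) * phiWord e ((j.succ ::ᵥ t).toList) one
          ((0 : Fin (m + 1)) :: η)) = 0 := by
      intro j
      apply Finset.sum_eq_zero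
      intro t _
      rw [List.Vector.toList_cons, phiWord_cons_succ, leftc_cons,
        if_neg (Ne.symm (Fin.succ_ne_zero j)), mul_zero]
    rw [Finset.sum_congr rfl (fun j _ => h2 j), Finset.sum_const, smul_zero, add_zero]
    apply Finset.sum_congr rfl
    intro t _
    rw [List.Vector.toList_cons, phiWord_cons_zero, leftc_cons, if_pos rfl]
    rfl
  rw [mix_apply, mix_apply]
  simp only [List.length_cons]
  rw [Finset.sum_range_succ']
  have h0 : (∑ v : List.Vector (Fin (m + 1)) 0,
      c v.toList * phiWord e v.toList one ((0 : Fin (m + 1)) :: η)) = 0 := by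
    rw [vector_sum_zero]
    simp [phiWord, one]
  rw [h0, add_zero]
  exact Finset.sum_congr rfl fun k _ => key k

lemma mix_cons_succ (c : Series (Fin (m + 1))) (j : Fin m) (η : List (Fin (m + 1))) :
    mix c e (j.succ :: η) = sh (e j) (mix (cleft j.succ c) e) η := by
  have hR : sh (e j) (mix (cleft j.succ c) e) η
      = ∑ k ∈ Finset.range (η.length + 1), ∑ t : List.Vector (Fin (m + 1)) k,
          (cleft j.succ c) t.toList * sh (e j) (phiWord e t.toList one) η := by
    have h1 : sh (e j) (mix (cleft j.succ c) e) η
        = sh (e j) (fun w => ∑ k ∈ Finset.range (η.length + 1),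
            ∑ t : List.Vector (Fin (m + 1)) k,
              (cleft j.succ c) t.toList * phiWord e t.toList one w) η :=
      sh_congr η _ _ _ _ (fun w _ => rfl)
        (fun w hw => mix_agree e (cleft j.succ c) η.length w hw)
    rw [h1, sh_sum_right]
    apply Finset.sum_congr rfl
    intro k _
    rw [sh_sum_right]
    apply Finset.sum_congr rfl
    intro t _
    exact sh_smul_right η _ (e j) _
  rw [hR]
  have key : ∀ k : ℕ, (∑ v : List.Vector (Fin (m + 1)) (k + 1),
      c v.toList * phiWord e v.toList one (j.succ :: η))
      = ∑ t : List.Vector (Fin (m + 1)) k,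
          (cleft j.succ c) t.toList * sh (e j) (phiWord e t.toList one) η := by
    intro k
    rw [vector_sum_succ, Fin.sum_univ_succ]
    have h0 : (∑ t : List.Vector (Fin (m + 1)) k,
        c (((0 : Fin (m + 1)) ::ᵥ t).toList) *
          phiWord e (((0 : Fin (m + 1)) ::ᵥ t).toList) one (j.succ :: η)) = 0 := by
      apply Finset.sum_eq_zero
      intro t _
      rw [List.Vector.toList_cons, phiWord_cons_zero, leftc_cons,
        if_neg (Fin.succ_ne_zero j), mul_zero]
    rw [h0, zero_add]
    rw [Finset.sum_eq_single j]
    · apply Finset.sum_congr rfl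
      intro t _
      rw [List.Vector.toList_cons, phiWord_cons_succ, leftc_cons, if_pos rfl]
      rfl
    · intro j' _ hj'
      apply Finset.sum_eq_zero
      intro t _
      rw [List.Vector.toList_cons, phiWord_cons_succ, leftc_cons,
        if_neg (by simpa [Fin.succ_inj] using (Ne.symm hj')), mul_zero]
    · intro h
      exact absurd (Finset.mem_univ j) h
  rw [mix_apply]
  simp only [List.length_cons]
  rw [Finset.sum_range_succ']
  have h0 : (∑ v : List.Vector (Fin (m + 1)) 0,
      c v.toList * phiWord e v.toList one (j.succ :: η)) = 0 := by
    rw [vector_sum_zero]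
    simp [phiWord, one]
  rw [h0, add_zero]
  exact Finset.sum_congr rfl fun k _ => key k

lemma mix_sh_aux : ∀ (n : ℕ) (η : List (Fin (m + 1))), η.length ≤ n →
    ∀ a b : Series (Fin (m + 1)), mix (sh a b) e η = sh (mix a e) (mix b e) η
  | _, [], _, a, b => by
      rw [sh_nil, mix_nil, sh_nil, mix_nil, mix_nil]
  | 0, x :: t, h, a, b => absurd h (by simp)
  | n + 1, x :: t, h, a, b => by
      have ht : t.length ≤ n := by simpa using h
      cases x using Fin.cases with
      | zero =>
          rw [mix_cons_zero]
          have hcl : cleft (0 : Fin (m + 1)) (sh a b)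
              = sh (cleft 0 a) b + sh a (cleft 0 b) := funext fun w => sh_cons a b 0 w
          rw [hcl, mix_add, mix_sh_aux n t ht (cleft 0 a) b,
            mix_sh_aux n t ht a (cleft 0 b), sh_cons,
            show cleft (0 : Fin (m + 1)) (mix a e) = mix (cleft 0 a) e from
              funext fun w => mix_cons_zero e a w,
            show cleft (0 : Fin (m + 1)) (mix b e) = mix (cleft 0 b) e from
              funext fun w => mix_cons_zero e b w]
      | succ j =>
          rw [mix_cons_succ]
          have hcl : cleft j.succ (sh a b)
              = sh (cleft j.succ a) b + sh a (cleft j.succ b) :=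
            funext fun w => sh_cons a b j.succ w
          rw [hcl]
          have step : sh (e j) (mix (sh (cleft j.succ a) b + sh a (cleft j.succ b)) e) t
              = sh (e j) (sh (mix (cleft j.succ a) e) (mix b e)
                  + sh (mix a e) (mix (cleft j.succ b) e)) t := by
            apply sh_congr t _ _ _ _ (fun w _ => rfl)
            intro w hw
            rw [mix_add, mix_sh_aux n w (le_trans hw ht) (cleft j.succ a) b,
              mix_sh_aux n w (le_trans hw ht) a (cleft j.succ b)]
            rfl
          rw [step, sh_add_right, sh_cons,
            show cleft j.succ (mix a e) = sh (e j) (mix (cleft j.succ a) e) from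
              funext fun w => mix_cons_succ e a j w,
            show cleft j.succ (mix b e) = sh (e j) (mix (cleft j.succ b) e) from
              funext fun w => mix_cons_succ e b j w,
            ← sh_assoc t (e j) (mix (cleft j.succ a) e) (mix b e)]
          congr 1
          calc sh (e j) (sh (mix a e) (mix (cleft j.succ b) e)) t
              = sh (e j) (sh (mix (cleft j.succ b) e) (mix a e)) t := by
                apply sh_congr t _ _ _ _ (fun w _ => rfl)
                intro w _
                exact sh_comm w _ _
            _ = sh (sh (e j) (mix (cleft j.succ b) e)) (mix a e) t :=
                (sh_assoc t _ _ _).symm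
            _ = sh (mix a e) (sh (e j) (mix (cleft j.succ b) e)) t := sh_comm t _ _

lemma mix_sh (η : List (Fin (m + 1))) (a b : Series (Fin (m + 1))) :
    mix (sh a b) e η = sh (mix a e) (mix b e) η :=
  mix_sh_aux e η.length η le_rfl a b

lemma mix_mix_aux (d : Fin m → Series (Fin (m + 1))) :
    ∀ (n : ℕ) (η : List (Fin (m + 1))), η.length ≤ n →
      ∀ c : Series (Fin (m + 1)), mix (mix c d) e η = mix c (star d e) η
  | _, [], _, c => by rw [mix_nil, mix_nil, mix_nil]
  | 0, x :: t, h, c => absurd h (by simp)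
  | n + 1, x :: t, h, c => by
      have ht : t.length ≤ n := by simpa using h
      cases x using Fin.cases with
      | zero =>
          rw [mix_cons_zero, mix_cons_zero,
            show cleft (0 : Fin (m + 1)) (mix c d) = mix (cleft 0 c) d from
              funext fun w => mix_cons_zero d c w]
          exact mix_mix_aux d n t ht (cleft 0 c)
      | succ j =>
          rw [mix_cons_succ, mix_cons_succ,
            show cleft j.succ (mix c d) = sh (d j) (mix (cleft j.succ c) d) from
              funext fun w => mix_cons_succ d c j w]
          have h3 : sh (e j) (mix (sh (d j) (mix (cleft j.succ c) d)) e) t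
              = sh (e j) (sh (mix (d j) e) (mix (cleft j.succ c) (star d e))) t := by
            apply sh_congr t _ _ _ _ (fun w _ => rfl)
            intro w hw
            rw [mix_sh]
            exact sh_congr w _ _ _ _ (fun u _ => rfl)
              (fun u hu => mix_mix_aux d n u (le_trans (le_trans hu hw) ht)
                (cleft j.succ c))
          rw [h3, ← sh_assoc t (e j) (mix (d j) e) (mix (cleft j.succ c) (star d e))]
          rfl

lemma mix_mix (d : Fin m → Series (Fin (m + 1))) (c : Series (Fin (m + 1)))
    (η : List (Fin (m + 1))) : mix (mix c d) e η = mix c (star d e) η :=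
  mix_mix_aux e d η.length η le_rfl c

lemma mix_one : ∀ η : List (Fin (m + 1)), mix (one : Series (Fin (m + 1))) e η = one η
  | [] => by rw [mix_nil]
  | x :: t => by
      have hone : one (x :: t) = 0 := by simp [one]
      cases x using Fin.cases with
      | zero =>
          rw [mix_cons_zero, cleft_one,
            show mix (0 : Series (Fin (m + 1))) e = 0 from funext fun w => mix_zero e w,
            hone]
          rfl
      | succ j =>
          rw [mix_cons_succ, cleft_one,
            show mix (0 : Series (Fin (m + 1))) e = 0 from funext fun w => mix_zero e w,
            sh_zero_right, hone]

lemma mix_oneV : ∀ (η : List (Fin (m + 1))) (c : Series (Fin (m + 1))),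
    mix c (oneV m) η = c η
  | [], c => mix_nil _ c
  | x :: t, c => by
      cases x using Fin.cases with
      | zero => rw [mix_cons_zero]; exact mix_oneV t (cleft 0 c)
      | succ j =>
          rw [mix_cons_succ,
            show (oneV m j : Series (Fin (m + 1))) = one from rfl, sh_one_left]
          exact mix_oneV t (cleft j.succ c)

end MixLemmas


/-- The multiplicative composition product `δ_c ∘ δ_d = δ_{d ⧢ (c ∘̄ δ_d)}`
(i.e., `c ⋆ d := d ⧢ (c ∘̄ δ_d)`) is associative, so `δ ⧢ ℝ^m⟨⟨X⟩⟩` is a monoid with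
identity `δ_1`. -/
theorem mult_comp_monoid (m : ℕ) :
    (∀ c d e : Fin m → Series (Fin (m + 1)), star (star c d) e = star c (star d e)) ∧
    (∀ c : Fin m → Series (Fin (m + 1)), star c (oneV m) = c ∧ star (oneV m) c = c) := by
  constructor
  · intro c d e
    funext i η
    show sh (e i) (mix (sh (d i) (mix (c i) d)) e) η
        = sh (sh (e i) (mix (d i) e)) (mix (c i) (star d e)) η
    calc sh (e i) (mix (sh (d i) (mix (c i) d)) e) η
        = sh (e i) (sh (mix (d i) e) (mix (c i) (star d e))) η := by
          apply sh_congr η _ _ _ _ (fun w _ => rfl)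
          intro w _
          rw [mix_sh]
          exact sh_congr w _ _ _ _ (fun u _ => rfl) (fun u _ => mix_mix e d (c i) u)
      _ = sh (sh (e i) (mix (d i) e)) (mix (c i) (star d e)) η :=
          (sh_assoc η _ _ _).symm
  · intro c
    constructor
    · funext i η
      show sh one (mix (c i) (oneV m)) η = c i η
      rw [sh_one_left]
      exact mix_oneV η (c i)
    · funext i η
      show sh (c i) (mix one c) η = c i η
      rw [show mix (one : Series (Fin (m + 1))) c = one from funext fun w => mix_one c w,
        sh_one_right]

end FPS
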